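/- Let π be a probability density on ℝ symmetric about 0, unimodal (nondecreasing on (-∞,0], nonincreasing on [0,∞)), with finite strictly positive variance, and let Π be its CDF. Let φ be any probability density on ℝ symmetric about 0. Then 4 ∫_0^∞ x (1 - Π(x)) (1 - 4x φ(2x)) dx > 0. -/

import Mathlib

open MeasureTheory Set

lemma even_integral (f : ℝ → ℝ) (hsymm : ∀ t, f t = f (-t)) :
    ∫ x, f x = 2 * ∫ x in Ioi (0:ℝ), f x := by
  have h : ∀ x, f |x| = f x := by
    intro x
    rcases abs_choice x with h | h
    · rw [h]
    · rw [h, ← hsymm]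
  calc ∫ x, f x = ∫ x, f |x| := by simp only [h]
  _ = 2 * ∫ x in Ioi (0:ℝ), f x := integral_comp_abs
open MeasureTheory Set

lemma key_bound (π : ℝ → ℝ) (hπnonneg : ∀ x, 0 ≤ π x)
    (hπint : Integrable π)
    (hanti : AntitoneOn π (Set.Ici (0 : ℝ)))
    (hmom : Integrable (fun x => x ^ 2 * π x))
    (hvar : 0 < ∫ t in Ioi (0:ℝ), t ^ 2 * π t)
    (x : ℝ) (hx : 0 < x) :
    4 * x ^ 2 * (∫ t in Ioi x, π t) < 2 * ∫ t in Ioi (0:ℝ), t ^ 2 * π t := by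
  by_cases hπx : π x = 0
  · have hz : ∀ t ∈ Ioi x, π t = (fun _ => (0:ℝ)) t := by
      intro t ht
      exact le_antisymm (hπx ▸ hanti hx.le (hx.le.trans (le_of_lt ht)) (le_of_lt ht)) (hπnonneg t)
    rw [setIntegral_congr_fun measurableSet_Ioi hz]
    simp only [integral_zero]
    nlinarith
  · have hπxpos : 0 < π x := lt_of_le_of_ne (hπnonneg x) (Ne.symm hπx)
    set s := Real.sqrt 2 * x with hs
    have hsqrt2 : (1:ℝ) < Real.sqrt 2 := by
      nlinarith [Real.sq_sqrt (by norm_num : (2:ℝ)≥0), Real.sqrt_nonneg 2]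
    have hxs : x < s := by nlinarith
    have hsq : Real.sqrt 2 ^ 2 = 2 := Real.sq_sqrt (by norm_num)
    -- integrability
    have hmo : ∀ S : Set ℝ, IntegrableOn (fun t => t ^ 2 * π t) S := fun S => hmom.integrableOn
    have hpi : ∀ S : Set ℝ, IntegrableOn π S := fun S => hπint.integrableOn
    have hsub : ∀ S : Set ℝ, IntegrableOn (fun t => (t ^ 2 - 2 * x ^ 2) * π t) S := by
      intro S
      have : (fun t => (t ^ 2 - 2 * x ^ 2) * π t)
          = fun t => t ^ 2 * π t - (2 * x ^ 2) * π t := by ext t; ring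
      rw [this]
      exact (hmo S).sub (((hpi S).const_mul _))
    -- split Ioi 0 = Ioc 0 x ∪ Ioi x
    have E1 : ∫ t in Ioi (0:ℝ), t ^ 2 * π t
        = (∫ t in Ioc 0 x, t ^ 2 * π t) + ∫ t in Ioi x, t ^ 2 * π t := by
      rw [← setIntegral_union (Ioc_disjoint_Ioi le_rfl) measurableSet_Ioi (hmo _) (hmo _),
        Ioc_union_Ioi_eq_Ioi hx.le]
    -- split Ioi x = Ioc x s ∪ Ioi s
    have E2 : ∫ t in Ioi x, (t ^ 2 - 2 * x ^ 2) * π t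
        = (∫ t in Ioc x s, (t ^ 2 - 2 * x ^ 2) * π t)
          + ∫ t in Ioi s, (t ^ 2 - 2 * x ^ 2) * π t := by
      rw [← setIntegral_union (Ioc_disjoint_Ioi le_rfl) measurableSet_Ioi (hsub _) (hsub _),
        Ioc_union_Ioi_eq_Ioi hxs.le]
    have E3 : ∫ t in Ioi x, (t ^ 2 - 2 * x ^ 2) * π t
        = (∫ t in Ioi x, t ^ 2 * π t) - 2 * x ^ 2 * ∫ t in Ioi x, π t := by
      rw [← integral_const_mul, ← integral_sub (hmo _) (((hpi _).const_mul _))]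
      congr 1; ext t; ring
    -- lower bound on Ioc 0 x
    have L1 : π x * (x ^ 3 / 3) ≤ ∫ t in Ioc 0 x, t ^ 2 * π t := by
      have hle : ∀ t ∈ Ioc (0:ℝ) x, t ^ 2 * π x ≤ t ^ 2 * π t := by
        intro t ht
        exact mul_le_mul_of_nonneg_left (hanti ht.1.le hx.le ht.2) (sq_nonneg t)
      have hi1 : IntegrableOn (fun t => t ^ 2 * π x) (Ioc 0 x) :=
        ((continuous_pow 2).mul continuous_const).integrableOn_Ioc
      have := setIntegral_mono_on hi1 (hmo _) measurableSet_Ioc hle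
      have hval : ∫ t in Ioc (0:ℝ) x, t ^ 2 * π x = π x * (x ^ 3 / 3) := by
        rw [← intervalIntegral.integral_of_le hx.le, intervalIntegral.integral_mul_const,
          integral_pow]
        push_cast; ring
      linarith [hval ▸ this]
    -- lower bound on Ioc x s
    have L2 : π x * ((s ^ 3 - x ^ 3) / 3 - 2 * x ^ 2 * (s - x))
        ≤ ∫ t in Ioc x s, (t ^ 2 - 2 * x ^ 2) * π t := by
      have hle : ∀ t ∈ Ioc x s, (t ^ 2 - 2 * x ^ 2) * π x ≤ (t ^ 2 - 2 * x ^ 2) * π t := by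
        intro t ht
        have h1 : π t ≤ π x := hanti hx.le (hx.le.trans ht.1.le) ht.1.le
        have h2 : t ^ 2 - 2 * x ^ 2 ≤ 0 := by nlinarith [ht.1, ht.2, hx]
        nlinarith
      have hi1 : IntegrableOn (fun t => (t ^ 2 - 2 * x ^ 2) * π x) (Ioc x s) :=
        (((continuous_pow 2).sub continuous_const).mul continuous_const).integrableOn_Ioc
      have hmono := setIntegral_mono_on hi1 (hsub _) measurableSet_Ioc hle
      have hval : ∫ t in Ioc x s, (t ^ 2 - 2 * x ^ 2) * π x
          = π x * ((s ^ 3 - x ^ 3) / 3 - 2 * x ^ 2 * (s - x)) := by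
        rw [← intervalIntegral.integral_of_le hxs.le, intervalIntegral.integral_mul_const]
        have hii : ∫ t in x..s, (t ^ 2 - 2 * x ^ 2) = (s ^ 3 - x ^ 3) / 3 - 2 * x ^ 2 * (s - x) := by
          rw [intervalIntegral.integral_sub ((continuous_pow 2).intervalIntegrable _ _)
            (intervalIntegrable_const), integral_pow, intervalIntegral.integral_const]
          simp only [smul_eq_mul]; push_cast; ring
        rw [hii]; ring
      linarith [hval ▸ hmono]
    -- nonneg on Ioi s
    have L3 : 0 ≤ ∫ t in Ioi s, (t ^ 2 - 2 * x ^ 2) * π t := by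
      apply setIntegral_nonneg measurableSet_Ioi
      intro t ht
      have : 2 * x ^ 2 ≤ t ^ 2 := by
        have hst : s < t := ht
        nlinarith [Real.sqrt_nonneg 2]
      exact mul_nonneg (by linarith) (hπnonneg t)
    -- combine
    have hnum : (0:ℝ) < 6 - 4 * Real.sqrt 2 := by nlinarith
    have hslack : 0 < π x * (x ^ 3 / 3) + π x * ((s ^ 3 - x ^ 3) / 3 - 2 * x ^ 2 * (s - x)) := by
      have hs3 : s ^ 3 = 2 * Real.sqrt 2 * x ^ 3 := by
        rw [hs, mul_pow, show Real.sqrt 2 ^ 3 = 2 * Real.sqrt 2 by rw [pow_succ, hsq]]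
      rw [hs3, hs]
      have : x ^ 3 / 3 + ((2 * Real.sqrt 2 * x ^ 3 - x ^ 3) / 3
          - 2 * x ^ 2 * (Real.sqrt 2 * x - x)) = x ^ 3 * (6 - 4 * Real.sqrt 2) / 3 := by ring
      rw [← mul_add, this]
      positivity
    nlinarith [L1, L2, L3, E1, E2, E3]
open MeasureTheory Set Function

lemma fubini_tail (π : ℝ → ℝ) (hπmeas : Measurable π) (hπnonneg : ∀ x, 0 ≤ π x)
    (hπint : Integrable π) (hmom : Integrable (fun x => x ^ 2 * π x)) :
    IntegrableOn (fun x => x * ∫ t in Ioi x, π t) (Ioi (0:ℝ)) ∧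
    ∫ x in Ioi (0:ℝ), x * ∫ t in Ioi x, π t = ∫ t in Ioi (0:ℝ), t ^ 2 / 2 * π t := by
  set μ := volume.restrict (Ioi (0:ℝ)) with hμ
  set f : ℝ → ℝ → ℝ := fun x t => if x < t then x * π t else 0 with hf
  have hmeasF : AEStronglyMeasurable (uncurry f) (μ.prod μ) := by
    have h1 : uncurry f
        = {p : ℝ × ℝ | p.1 < p.2}.indicator (fun p => p.1 * π p.2) := by
      ext p
      by_cases h : p.1 < p.2 <;>
        simp [uncurry, hf, indicator, h]
    rw [h1]
    exact ((measurable_fst.mul (hπmeas.comp measurable_snd)).indicator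
      (measurableSet_lt measurable_fst measurable_snd)).aestronglyMeasurable
  have hslice : ∀ t : ℝ, (fun x => f x t) = (Iio t).indicator (fun x => x * π t) := by
    intro t; ext x
    by_cases h : x < t <;> simp [hf, indicator, h]
  have hsliceInt : ∀ t : ℝ, Integrable (fun x => f x t) μ := by
    intro t
    rw [hslice t]
    rw [integrable_indicator_iff measurableSet_Iio]
    have : μ.restrict (Iio t) = volume.restrict (Ioo 0 t) := by
      rw [hμ, Measure.restrict_restrict measurableSet_Iio, inter_comm, Ioi_inter_Iio]
    unfold IntegrableOn
    rw [this]
    exact ((continuous_id.mul continuous_const).integrableOn_Ioc).mono_set Ioo_subset_Ioc_self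
  have hinner : ∀ t : ℝ, (0:ℝ) < t → ∫ x in Ioo (0:ℝ) t, x = t ^ 2 / 2 := by
    intro t ht
    rw [← integral_Ioc_eq_integral_Ioo, ← intervalIntegral.integral_of_le ht.le,
      integral_id]
    ring
  have hcompute : ∀ t ∈ Ioi (0:ℝ), (∫ x, f x t ∂μ) = t ^ 2 / 2 * π t := by
    intro t ht
    rw [hslice t, integral_indicator measurableSet_Iio, hμ,
      Measure.restrict_restrict measurableSet_Iio, inter_comm, Ioi_inter_Iio,
      integral_mul_const, hinner t ht]
  have hnormcompute : ∀ t ∈ Ioi (0:ℝ), (∫ x, ‖f x t‖ ∂μ) = t ^ 2 / 2 * π t := by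
    intro t ht
    have h2 : (fun x => ‖f x t‖) = (Iio t).indicator (fun x => ‖x * π t‖) := by
      ext x
      rw [congrFun (hslice t) x, norm_indicator_eq_indicator_norm]
    rw [h2, integral_indicator measurableSet_Iio, hμ,
      Measure.restrict_restrict measurableSet_Iio, inter_comm, Ioi_inter_Iio]
    have h3 : ∀ x ∈ Ioo (0:ℝ) t, ‖x * π t‖ = x * π t := by
      intro x hx
      exact Real.norm_of_nonneg (mul_nonneg hx.1.le (hπnonneg t))
    rw [setIntegral_congr_fun measurableSet_Ioo h3, integral_mul_const, hinner t ht]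
  have hmom2 : Integrable (fun t => t ^ 2 / 2 * π t) μ := by
    have : Integrable (fun t => t ^ 2 / 2 * π t) volume := by
      have := hmom.div_const 2
      apply this.congr
      filter_upwards with t
      ring
    exact this.integrableOn
  have hnormInt : Integrable (fun t => ∫ x, ‖f x t‖ ∂μ) μ := by
    apply hmom2.congr
    filter_upwards [ae_restrict_mem measurableSet_Ioi] with t ht
    exact (hnormcompute t ht).symm
  have hF : Integrable (uncurry f) (μ.prod μ) :=
    (integrable_prod_iff' hmeasF).2 ⟨ae_of_all _ hsliceInt, hnormInt⟩
  have houter : ∀ x ∈ Ioi (0:ℝ), (∫ t, f x t ∂μ) = x * ∫ t in Ioi x, π t := by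
    intro x hx
    have h4 : (fun t => f x t) = (Ioi x).indicator (fun t => x * π t) := by
      ext t
      by_cases h : x < t <;> simp [hf, indicator, h]
    rw [h4, integral_indicator measurableSet_Ioi, hμ,
      Measure.restrict_restrict measurableSet_Ioi,
      inter_eq_left.mpr (Ioi_subset_Ioi hx.le), integral_const_mul]
  constructor
  · apply (hF.integral_prod_left).congr
    filter_upwards [ae_restrict_mem measurableSet_Ioi] with x hx
    exact houter x hx
  · calc ∫ x in Ioi (0:ℝ), x * ∫ t in Ioi x, π t
        = ∫ x, ∫ t, f x t ∂μ ∂μ := by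
          apply integral_congr_ae
          filter_upwards [ae_restrict_mem measurableSet_Ioi] with x hx
          exact (houter x hx).symm
    _ = ∫ t, ∫ x, f x t ∂μ ∂μ := integral_integral_swap hF
    _ = ∫ t in Ioi (0:ℝ), t ^ 2 / 2 * π t := by
          apply integral_congr_ae
          filter_upwards [ae_restrict_mem measurableSet_Ioi] with t ht
          exact hcompute t ht
theorem covariance_pos
    (π φ : ℝ → ℝ) (hπmeas : Measurable π) (hφmeas : Measurable φ)
    (hπnonneg : ∀ x, 0 ≤ π x) (hφnonneg : ∀ x, 0 ≤ φ x)
    (hπint : Integrable π) (hφint : Integrable φ)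
    (hπone : ∫ x, π x = 1) (hφone : ∫ x, φ x = 1)
    (hπsymm : ∀ t, π t = π (-t)) (hφsymm : ∀ t, φ t = φ (-t))
    (hmono : MonotoneOn π (Set.Iic (0 : ℝ)))
    (hanti : AntitoneOn π (Set.Ici (0 : ℝ)))
    (hmom : Integrable (fun x => x ^ 2 * π x))
    (hvarpos : 0 < ∫ x, x ^ 2 * π x) :
    0 < 4 * ∫ x in Set.Ioi (0 : ℝ),
        x * (1 - ∫ t in Set.Iic x, π t) * (1 - 4 * x * φ (2 * x)) := by
  set σ2 := ∫ x, x ^ 2 * π x with hσ2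
  have hσ2' : σ2 = 2 * ∫ t in Ioi (0:ℝ), t ^ 2 * π t := by
    rw [hσ2]
    exact even_integral _ (fun t => by rw [neg_sq, ← hπsymm])
  have hvar' : 0 < ∫ t in Ioi (0:ℝ), t ^ 2 * π t := by
    rw [hσ2'] at hvarpos; linarith
  have hkey : ∀ x ∈ Ioi (0:ℝ), 4 * x ^ 2 * (∫ t in Ioi x, π t) < σ2 := by
    intro x hx
    rw [hσ2']
    exact key_bound π hπnonneg hπint hanti hmom hvar' x hx
  have hGdef : ∀ x : ℝ, 1 - (∫ t in Iic x, π t) = ∫ t in Ioi x, π t := by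
    intro x
    have h := integral_add_compl (measurableSet_Iic (a := x)) hπint
    rw [compl_Iic, hπone] at h
    linarith
  obtain ⟨hint_xG, hval_xG⟩ := fubini_tail π hπmeas hπnonneg hπint hmom
  have hxG_val : ∫ x in Ioi (0:ℝ), x * ∫ t in Ioi x, π t = σ2 / 4 := by
    rw [hval_xG, hσ2']
    have h : ∀ t ∈ Ioi (0:ℝ), t ^ 2 / 2 * π t = (fun t => t ^ 2 * π t / 2) t :=
      fun t _ => by ring
    rw [setIntegral_congr_fun measurableSet_Ioi h, integral_div]
    ring
  -- φ facts
  have hφIoi : ∫ x in Ioi (0:ℝ), φ x = 1 / 2 := by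
    have h := even_integral φ hφsymm
    rw [hφone] at h; linarith
  have hφ2val : ∫ x in Ioi (0:ℝ), φ (2 * x) = 1 / 4 := by
    rw [integral_comp_mul_left_Ioi φ 0 (by norm_num : (0:ℝ) < 2), mul_zero, hφIoi,
      smul_eq_mul]
    norm_num
  have hφ2int : IntegrableOn (fun x => φ (2 * x)) (Ioi (0:ℝ)) :=
    (hφint.comp_mul_left' two_ne_zero).integrableOn
  -- measurability and nonnegativity of tail G
  have hGanti : Antitone (fun x => ∫ t in Ioi x, π t) := by
    intro a b hab
    exact setIntegral_mono_set hπint.integrableOn (ae_of_all _ hπnonneg)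
      (HasSubset.Subset.eventuallyLE (Ioi_subset_Ioi hab))
  have hGmeas : Measurable (fun x => ∫ t in Ioi x, π t) := hGanti.measurable
  have hGnonneg : ∀ x : ℝ, 0 ≤ ∫ t in Ioi x, π t :=
    fun x => setIntegral_nonneg measurableSet_Ioi (fun t _ => hπnonneg t)
  -- the positive slack term
  set D : ℝ → ℝ := fun x => (σ2 - 4 * x ^ 2 * ∫ t in Ioi x, π t) * φ (2 * x) with hD
  have hDnonneg : ∀ x ∈ Ioi (0:ℝ), 0 ≤ D x := by
    intro x hx
    exact mul_nonneg (sub_nonneg.mpr (hkey x hx).le) (hφnonneg _)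
  have hDmeas : AEStronglyMeasurable D (volume.restrict (Ioi (0:ℝ))) := by
    apply Measurable.aestronglyMeasurable
    exact ((measurable_const.sub (((measurable_id.pow_const 2).const_mul 4).mul hGmeas)).mul
      (hφmeas.comp (measurable_id.const_mul 2)))
  have hDint : IntegrableOn D (Ioi (0:ℝ)) := by
    apply Integrable.mono (hφ2int.const_mul σ2) hDmeas
    filter_upwards [ae_restrict_mem measurableSet_Ioi] with x hx
    rw [Real.norm_of_nonneg (hDnonneg x hx), Real.norm_of_nonneg
      (mul_nonneg (by positivity : (0:ℝ) ≤ σ2) (hφnonneg _))]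
    · exact mul_le_mul_of_nonneg_right (by linarith [mul_nonneg (mul_nonneg
        (by norm_num : (0:ℝ) ≤ 4) (sq_nonneg x)) (hGnonneg x)]) (hφnonneg _)
  have hDpos : 0 < ∫ x in Ioi (0:ℝ), D x := by
    rw [integral_pos_iff_support_of_nonneg_ae
      (by filter_upwards [ae_restrict_mem measurableSet_Ioi] with x hx using hDnonneg x hx)
      hDint]
    have hS : 0 < volume.restrict (Ioi (0:ℝ)) {x | φ (2 * x) ≠ 0} := by
      by_contra h
      push_neg at h
      have h0 : volume.restrict (Ioi (0:ℝ)) {x | φ (2 * x) ≠ 0} = 0 := le_antisymm h (by simp)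
      have hae : (fun x => φ (2 * x)) =ᵐ[volume.restrict (Ioi (0:ℝ))] 0 := by
        rw [Filter.EventuallyEq, ae_iff]
        simpa using h0
      have : ∫ x in Ioi (0:ℝ), φ (2 * x) = 0 := integral_eq_zero_of_ae hae
      rw [hφ2val] at this
      norm_num at this
    calc (0:ENNReal) < volume.restrict (Ioi (0:ℝ)) {x | φ (2 * x) ≠ 0} := hS
    _ = volume ({x | φ (2 * x) ≠ 0} ∩ Ioi 0) := Measure.restrict_apply' measurableSet_Ioi
    _ ≤ volume (Function.support D ∩ Ioi 0) := by
        apply measure_mono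
        rintro x ⟨hx1, hx2⟩
        refine ⟨?_, hx2⟩
        have hφpos : 0 < φ (2 * x) := lt_of_le_of_ne (hφnonneg _) (Ne.symm hx1)
        have : 0 < D x := mul_pos (sub_pos.mpr (hkey x hx2)) hφpos
        exact ne_of_gt this
    _ = volume.restrict (Ioi (0:ℝ)) (Function.support D) :=
        (Measure.restrict_apply' measurableSet_Ioi).symm
  -- final assembly
  have hsplit : ∀ x ∈ Ioi (0:ℝ),
      x * (1 - ∫ t in Iic x, π t) * (1 - 4 * x * φ (2 * x))
      = ((fun x => x * ∫ t in Ioi x, π t) x - (fun x => σ2 * φ (2 * x)) x) + D x := by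
    intro x hx
    rw [hGdef x, hD]
    ring
  rw [setIntegral_congr_fun measurableSet_Ioi hsplit]
  beta_reduce
  have hIsub : Integrable (fun x => x * (∫ t in Ioi x, π t) - σ2 * φ (2 * x))
      (volume.restrict (Ioi (0:ℝ))) := by
    have h := hint_xG.sub (hφ2int.const_mul σ2)
    exact h.congr (ae_of_all _ fun x => rfl)
  rw [integral_add hIsub hDint,
    integral_sub hint_xG (hφ2int.const_mul σ2), integral_const_mul, hxG_val, hφ2val]
  nlinarith [hDpos]
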